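/- Let 𝒫 be a set of paths closed under taking contiguous sublists and let Q : 𝒫 → ℝ be nonnegative with Q(()) = 0 and superadditive under concatenation. For a path p = (i_1, …, i_t) ∈ 𝒫, define the marginal contributions θ_k := Q((i_1, …, i_k)) − Q((i_1, …, i_{k−1})) for k ∈ {1, …, t}. Then (i) θ_k ≥ 0 for every k; (ii) ∑_{k=1}^t θ_k = Q(p); and (iii) for all indices 1 ≤ a ≤ b ≤ t, ∑_{k=a}^{b} θ_k ≥ Q((i_a, …, i_b)). -/
import Mathlib


/-- If `Q` is nonnegative on a set of paths `Paths` closed under contiguous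
sublists, with `Q [] = 0`, and is superadditive under concatenation, then for any path
`p ∈ Paths` the marginal contributions `θ k = Q (i_1,…,i_{k+1}) − Q (i_1,…,i_k)` are
(i) nonnegative, (ii) sum to `Q p`, and (iii) dominate the recourse of every contiguous
segment of `p`. -/
theorem marginal_contributions_valid
    {N : Type*} (Paths : Set (List N)) (Q : List N → ℝ)
    (hnodup : ∀ p ∈ Paths, p.Nodup)
    (hclosed : ∀ p ∈ Paths, ∀ p' : List N, p' <:+: p → p' ∈ Paths)
    (hnonneg : ∀ p ∈ Paths, 0 ≤ Q p)
    (hempty : Q [] = 0)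
    (hsuper : ∀ p1 ∈ Paths, ∀ p2 ∈ Paths, p1 ++ p2 ∈ Paths → Q p1 + Q p2 ≤ Q (p1 ++ p2))
    (p : List N) (hp : p ∈ Paths)
    (θ : ℕ → ℝ) (hθ : ∀ k, θ k = Q (p.take (k + 1)) - Q (p.take k)) :
    (∀ k < p.length, 0 ≤ θ k) ∧
    (∑ k ∈ Finset.range p.length, θ k) = Q p ∧
    (∀ a b : ℕ, a ≤ b → b < p.length →
      Q ((p.drop a).take (b + 1 - a)) ≤ ∑ k ∈ Finset.Icc a b, θ k) := by
  have hmem : ∀ a m : ℕ, (p.drop a).take m ∈ Paths := by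
    intro a m
    exact hclosed p hp _ ⟨p.take a, (p.drop a).drop m, by simp [List.take_append_drop]⟩
  have htake : ∀ a : ℕ, p.take a ∈ Paths := by
    intro a
    simpa using hmem 0 a
  have hstep : ∀ a m : ℕ, Q (p.take a) + Q ((p.drop a).take m) ≤ Q (p.take (a + m)) := by
    intro a m
    have h := hsuper (p.take a) (htake a) ((p.drop a).take m) (hmem a m)
      (by rw [← List.take_add]; exact htake (a + m))
    rwa [← List.take_add] at h
  have hsum : ∀ n : ℕ, ∑ k ∈ Finset.range n, θ k = Q (p.take n) := by
    intro n
    calc ∑ k ∈ Finset.range n, θ k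
        = ∑ k ∈ Finset.range n, (Q (p.take (k + 1)) - Q (p.take k)) := by
          exact Finset.sum_congr rfl fun k _ => hθ k
      _ = Q (p.take n) - Q (p.take 0) := Finset.sum_range_sub (fun k => Q (p.take k)) n
      _ = Q (p.take n) := by simp [hempty]
  refine ⟨?_, ?_, ?_⟩
  · intro k hk
    have h := hstep k 1
    have hseg := hnonneg _ (hmem k 1)
    rw [hθ k]
    linarith
  · simpa using hsum p.length
  · intro a b hab hb
    have hicc : ∑ k ∈ Finset.Icc a b, θ k = Q (p.take (b + 1)) - Q (p.take a) := by
      rw [← Finset.Ico_add_one_right_eq_Icc, Finset.sum_Ico_eq_sub _ (by omega), hsum, hsum]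
    have h := hstep a (b + 1 - a)
    have : a + (b + 1 - a) = b + 1 := by omega
    rw [this] at h
    rw [hicc]
    linarith
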